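/- For γ = 1/2, the function h₁(x) = (1/(2 x^(3/2))) exp(−π/(4x)) on (0,∞) satisfies the singular integral equation h₁(x) = (1/(2x)) ∫₀ˣ h₁(u)/√(x−u) du for all x > 0. -/

import Mathlib

open MeasureTheory Real

theorem h1_half_integral_equation (x : ℝ) (hx : 0 < x) :
    (1 / (2 * x ^ ((3 : ℝ) / 2))) * Real.exp (-π / (4 * x)) =
      (1 / (2 * x)) *
        ∫ u in Set.Ioo (0 : ℝ) x,
          ((1 / (2 * u ^ ((3 : ℝ) / 2))) * Real.exp (-π / (4 * u))) / Real.sqrt (x - u) := by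
  set g : ℝ → ℝ := fun u =>
    ((1 / (2 * u ^ ((3 : ℝ) / 2))) * Real.exp (-π / (4 * u))) / Real.sqrt (x - u) with hg
  set f : ℝ → ℝ := fun t => x / (1 + t) with hf
  set f' : ℝ → ℝ := fun t => -x / (1 + t) ^ 2 with hf'
  have himg : f '' Set.Ioi 0 = Set.Ioo 0 x := by
    ext u
    simp only [Set.mem_image, Set.mem_Ioi, Set.mem_Ioo, hf]
    constructor
    · rintro ⟨t, ht, rfl⟩
      have h1 : (0:ℝ) < 1 + t := by linarith
      exact ⟨by positivity, by rw [div_lt_iff₀ h1]; nlinarith⟩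
    · rintro ⟨hu0, hux⟩
      refine ⟨x / u - 1, ?_, ?_⟩
      · have : 1 < x / u := (one_lt_div hu0).mpr hux
        linarith
      · field_simp; ring
  have hderiv : ∀ t ∈ Set.Ioi (0:ℝ), HasDerivWithinAt f (f' t) (Set.Ioi 0) t := by
    intro t ht
    have h1 : (1 + t) ≠ 0 := by simp only [Set.mem_Ioi] at ht; positivity
    have := ((hasDerivAt_const t x).div ((hasDerivAt_id t).const_add 1) h1)
    refine this.hasDerivWithinAt.congr_deriv ?_
    simp [hf']
  have hinj : Set.InjOn f (Set.Ioi 0) := by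
    intro a ha b hb hab
    simp only [Set.mem_Ioi] at ha hb
    have h1 : (1:ℝ) + a ≠ 0 := by positivity
    have h2 : (1:ℝ) + b ≠ 0 := by positivity
    simp only [hf] at hab
    field_simp at hab
    linarith
  rw [← himg, MeasureTheory.integral_image_eq_integral_abs_deriv_smul
    measurableSet_Ioi hderiv hinj g]
  have hr : 0 < π / (4 * x) := by positivity
  have key : ∀ t ∈ Set.Ioi (0:ℝ), |f' t| • g (f t)
      = ((1 / (2 * x)) * Real.exp (-π / (4 * x))) *
          (t ^ ((1:ℝ)/2 - 1) * Real.exp (-(π / (4 * x) * t))) := by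
    intro t ht
    simp only [Set.mem_Ioi] at ht
    simp only [hf, hf', hg]
    have h1 : (0:ℝ) < 1 + t := by linarith
    have habs : |(-x / (1 + t) ^ 2)| = x / (1+t)^2 := by
      rw [abs_div, abs_neg, abs_of_pos hx, abs_of_pos (by positivity : (0:ℝ) < (1+t)^2)]
    have hexp : Real.exp (-π / (4 * (x / (1+t)))) =
        Real.exp (-π / (4 * x)) * Real.exp (-(π / (4 * x) * t)) := by
      rw [← Real.exp_add]; congr 1; field_simp; ring
    have hxd : x - x / (1+t) = x * t / (1+t) := by field_simp; ring
    have h32 : (x / (1+t)) ^ ((3:ℝ)/2) = (x / (1+t)) * Real.sqrt (x / (1+t)) := by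
      rw [show (3:ℝ)/2 = 1 + 1/2 by norm_num, Real.rpow_add (by positivity), Real.rpow_one,
        ← Real.sqrt_eq_rpow]
    have htm : t ^ ((1:ℝ)/2 - 1) = 1 / Real.sqrt t := by
      rw [show (1:ℝ)/2 - 1 = -(1/2) by norm_num, Real.rpow_neg ht.le, ← Real.sqrt_eq_rpow,
        one_div]
    rw [smul_eq_mul, habs, hexp, hxd, h32, htm,
      Real.sqrt_div hx.le, Real.sqrt_div (show (0:ℝ) ≤ x*t by positivity),
      Real.sqrt_mul hx.le]
    have ha : Real.sqrt x ^ 2 = x := Real.sq_sqrt hx.le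
    have hb : Real.sqrt t ^ 2 = t := Real.sq_sqrt ht.le
    have hc : Real.sqrt (1 + t) ^ 2 = 1 + t := Real.sq_sqrt h1.le
    have ha0 : Real.sqrt x ≠ 0 := by positivity
    have hb0 : Real.sqrt t ≠ 0 := by positivity
    have hc0 : Real.sqrt (1 + t) ≠ 0 := by positivity
    rw [← hc, ← hb, ← ha]
    field_simp
    ring_nf
    simp only [hb, hc, ha]
    ring
  rw [MeasureTheory.setIntegral_congr_fun measurableSet_Ioi key, integral_const_mul,
    Real.integral_rpow_mul_exp_neg_mul_Ioi (by norm_num : (0:ℝ) < 1/2) hr,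
    Real.Gamma_one_half_eq]
  have h4 : (1 / (π / (4 * x))) ^ ((1:ℝ)/2) = 2 * Real.sqrt x / Real.sqrt π := by
    rw [show (1:ℝ) / (π / (4 * x)) = 4 * x / π by field_simp]
    rw [← Real.sqrt_eq_rpow, Real.sqrt_div' _ (by positivity), Real.sqrt_mul (by norm_num) x,
      show Real.sqrt 4 = 2 by rw [show (4:ℝ) = 2^2 by norm_num, Real.sqrt_sq (by norm_num)]]
  rw [h4]
  have hsx : Real.sqrt x > 0 := Real.sqrt_pos.mpr hx
  have hsπ : Real.sqrt π > 0 := Real.sqrt_pos.mpr pi_pos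
  have hx32 : x ^ ((3:ℝ)/2) = x * Real.sqrt x := by
    rw [show (3:ℝ)/2 = 1 + 1/2 by norm_num, Real.rpow_add hx, Real.rpow_one,
      ← Real.sqrt_eq_rpow]
  rw [hx32]
  have hxx : Real.sqrt x ^ 2 = x := Real.sq_sqrt hx.le
  field_simp
  ring_nf
  rw [hxx]
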